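/- Let K be a lower finite normed lattice and a ∈ K. Then the set Sk_a(K) of finite preskeletons containing an element x with a ≤ x and ∂a = ∂x is dense in the poset Sk(K) of all finite preskeletons of K ordered by reverse containment; i.e., every finite preskeleton extends to a finite preskeleton in Sk_a(K). -/

import Mathlib

/-- Auxiliary: the norm of a finite sup is at most `c` if each term's norm is. -/
lemma dsup_le_aux {K : Type*} [Lattice K] [OrderBot K]
    (d : K → Ordinal) (hd : ∀ x y : K, d (x ⊔ y) = max (d x) (d y)) (hd0 : d ⊥ = 0)
    (s : Finset K) (f : K → K) (c : Ordinal) (h : ∀ z ∈ s, d (f z) ≤ c) :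
    d (s.sup f) ≤ c := by
  induction s using Finset.cons_induction with
  | empty => simp [hd0, zero_le]
  | cons z s hz ih =>
      rw [Finset.sup_cons, hd]
      exact max_le (h z (Finset.mem_cons_self _ _))
        (ih fun w hw => h w (Finset.mem_cons.mpr (Or.inr hw)))

/-- For each a in a lower finite normed lattice K, the set Sk_a(K) of finite preskeletons
containing some x with a ≤ x and ∂a = ∂x is dense in the poset of finite preskeletons
ordered by reverse containment: every finite preskeleton E extends to a finite preskeleton
F ∈ Sk_a(K). -/
theorem stmt_13 (K : Type*) [Lattice K] [OrderBot K]
    (hLF : ∀ q : K, (Set.Iic q).Finite)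
    (d : K → Ordinal) (hd : ∀ x y : K, d (x ⊔ y) = max (d x) (d y)) (hd0 : d ⊥ = 0)
    (p : K → Ordinal → K)
    (hp : ∀ (x : K) (ξ : Ordinal), IsGreatest {z : K | z ≤ x ∧ d z ≤ ξ} (p x ξ))
    (a : K) :
    ∀ E : Finset K,
      (∀ ξ : Ordinal, IsChain (· ≤ ·) {x ∈ (E : Set K) | d x = ξ}) →
      (∀ x ∈ E, ∀ ξ : Ordinal, p x ξ ∈ E) →
      ∃ F : Finset K, E ⊆ F ∧
        (∀ ξ : Ordinal, IsChain (· ≤ ·) {x ∈ (F : Set K) | d x = ξ}) ∧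
        (∀ x ∈ F, ∀ ξ : Ordinal, p x ξ ∈ F) ∧
        ∃ x ∈ F, a ≤ x ∧ d a = d x := by
  classical
  intro E hchain hproj
  -- monotonicity of d
  have mono : ∀ {u v : K}, u ≤ v → d u ≤ d v := by
    intro u v huv
    have h := hd u v
    rw [sup_eq_right.mpr huv] at h
    rw [h]; exact le_max_left _ _
  have ple : ∀ (y : K) (ξ : Ordinal), p y ξ ≤ y := fun y ξ => (hp y ξ).1.1
  have pd : ∀ (y : K) (ξ : Ordinal), d (p y ξ) ≤ ξ := fun y ξ => (hp y ξ).1.2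
  have pge : ∀ {y ξ} {z : K}, z ≤ y → d z ≤ ξ → z ≤ p y ξ :=
    fun h1 h2 => (hp _ _).2 ⟨h1, h2⟩
  have pself : ∀ {y : K} {ξ}, d y ≤ ξ → p y ξ = y := fun {y ξ} h =>
    le_antisymm (ple y ξ) (pge le_rfl h)
  have pmono : ∀ (y : K) {ξ ξ'}, ξ ≤ ξ' → p y ξ ≤ p y ξ' := by
    intro y ξ ξ' hξ
    exact pge (ple y _) (le_trans (pd y _) hξ)
  -- the key element
  set e : K := E.sup (fun z => p z (d a)) with he
  have hde : d e ≤ d a :=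
    dsup_le_aux d hd hd0 E _ (d a) (fun z _ => pd z (d a))
  set x : K := a ⊔ e with hx
  have hax : a ≤ x := le_sup_left
  have hdx : d x = d a := by
    rw [hx, hd]; exact max_eq_left hde
  -- composition of projections
  have pcomp : ∀ ξ ξ' : Ordinal, p (p x ξ') ξ = p x (min ξ ξ') := by
    intro ξ ξ'
    refine (hp (p x ξ') ξ).unique ⟨⟨?_, ?_⟩, ?_⟩
    · exact pge (ple x _) (le_trans (pd x _) (min_le_right _ _))
    · exact le_trans (pd x _) (min_le_left _ _)
    · rintro w ⟨hw1, hw2⟩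
      exact pge (le_trans hw1 (ple x _))
        (le_min hw2 (le_trans (mono hw1) (pd x ξ')))
  -- the set of projections of x
  set P : Finset K := (hLF x).toFinset.filter (fun z => ∃ ξ, p x ξ = z) with hP
  have memP : ∀ {z : K}, z ∈ P ↔ (z ≤ x ∧ ∃ ξ, p x ξ = z) := by
    intro z
    rw [hP, Finset.mem_filter, Set.Finite.mem_toFinset, Set.mem_Iic]
  refine ⟨E ∪ P, Finset.subset_union_left, ?_, ?_, x, ?_, hax, hdx.symm⟩
  · -- chain condition
    intro ξ y1 hy1 y2 hy2 hne
    obtain ⟨hy1F, hdy1⟩ := hy1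
    obtain ⟨hy2F, hdy2⟩ := hy2
    rw [Finset.coe_union, Set.mem_union, Finset.mem_coe, Finset.mem_coe] at hy1F hy2F
    -- helper: an element of E of norm ≤ d a is below x
    have hEx : ∀ {y : K}, y ∈ E → d y ≤ d a → y ≤ x := by
      intro y hyE hyd
      have : y ≤ e := by
        calc y = p y (d a) := (pself hyd).symm
        _ ≤ e := by rw [he]; exact Finset.le_sup (f := fun z => p z (d a)) hyE
      exact le_trans this le_sup_right
    -- helper: E-element vs projection
    have key : ∀ {y q : K}, y ∈ E → d y = ξ → q ∈ P → d q = ξ → y ≤ q := by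
      intro y q hyE hyd hqP hqd
      obtain ⟨hqx, ξ', hξ'⟩ := memP.mp hqP
      have hξa : ξ ≤ d a := hqd ▸ (hdx ▸ mono hqx)
      have hyx : y ≤ x := hEx hyE (hyd ▸ hξa)
      have hdq : d q ≤ ξ' := hξ' ▸ pd x ξ'
      exact hξ' ▸ pge hyx (hyd.le.trans (hqd ▸ hdq))
    rcases hy1F with h1 | h1 <;> rcases hy2F with h2 | h2
    · exact hchain ξ ⟨h1, hdy1⟩ ⟨h2, hdy2⟩ hne
    · exact Or.inl (key h1 hdy1 (memP.mpr (memP.mp h2)) hdy2)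
    · exact Or.inr (key h2 hdy2 (memP.mpr (memP.mp h1)) hdy1)
    · obtain ⟨_, ξ1, hξ1⟩ := memP.mp h1
      obtain ⟨_, ξ2, hξ2⟩ := memP.mp h2
      rcases le_total ξ1 ξ2 with h | h
      · exact Or.inl (hξ1 ▸ hξ2 ▸ pmono x h)
      · exact Or.inr (hξ2 ▸ hξ1 ▸ pmono x h)
  · -- closure under projections
    intro z hz ξ
    rw [Finset.mem_union] at hz ⊢
    rcases hz with hz | hz
    · exact Or.inl (hproj z hz ξ)
    · obtain ⟨hzx, ξ', hξ'⟩ := memP.mp hz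
      refine Or.inr (memP.mpr ⟨?_, min ξ ξ', by rw [← hξ', pcomp]⟩)
      rw [← hξ', pcomp]
      exact ple x _
  · -- x ∈ F
    exact Finset.mem_union_right _ (memP.mpr ⟨le_rfl, d x, pself le_rfl⟩)
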